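/- For every n ≥ 1, the map σ ↦ Majcode⁻¹(δ(Majcode σ)) is an involution on S_n sending each permutation with descent set D to a permutation with descent set {1,…,n−1} ∖ D; consequently the generating polynomial F(q) = ∑_{σ∈S_n} q^{maj σ} satisfies F(q) = q^{n(n−1)/2} F(1/q). -/

import Mathlib

/-- Descent set (ligne of route) of a word, with 1-based positions. -/
def ligne (w : List ℕ) : Finset ℕ :=
  (Finset.Icc 1 (w.length - 1)).filter (fun i => w.getD (i-1) 0 > w.getD i 0)

/-- Major index of a word. -/
def maj (w : List ℕ) : ℕ := ∑ i ∈ ligne w, i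

/-- Inversion number of a word. -/
def inv (w : List ℕ) : ℕ :=
  ((Finset.range w.length ×ˢ Finset.range w.length).filter
    (fun p => p.1 < p.2 ∧ w.getD p.1 0 > w.getD p.2 0)).card

/-- `w` is (the one-line word of) a permutation of `1,…,n`. -/
def IsPermWord (n : ℕ) (w : List ℕ) : Prop := w.Perm (List.range' 1 n)

/-- One-line word of `σ ∈ S_n` with values in `1,…,n`. -/
def toWord {n : ℕ} (σ : Equiv.Perm (Fin n)) : List ℕ := List.ofFn (fun i => (σ i : ℕ) + 1)

/-- Subexcedent word: `0 ≤ d_i ≤ i-1` (1-based), i.e. `d_i ≤ i` for 0-based `i`. -/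
def Subexcedent (w : List ℕ) : Prop := ∀ i < w.length, w.getD i 0 ≤ i

/-- Subdiagonal word: `0 ≤ d_i ≤ n-i` (1-based). -/
def Subdiagonal (w : List ℕ) : Prop := ∀ i < w.length, w.getD i 0 + i + 1 ≤ w.length

/-- Lehmer code: `d_i = #{j < i : x_j > x_i}`. -/
def invcode (w : List ℕ) : List ℕ :=
  (List.range w.length).map (fun i => ((Finset.range i).filter (fun j => w.getD j 0 > w.getD i 0)).card)

/-- `Lc`-code: `d_i = #{j > i : x_i > x_j}`. -/
def lc (w : List ℕ) : List ℕ :=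
  (List.range w.length).map (fun i => ((Finset.Ico (i+1) w.length).filter (fun j => w.getD i 0 > w.getD j 0)).card)

/-- Major index code: `d_i = maj(σ|_i) - maj(σ|_{i-1})`, where `σ|_i` erases letters `> i`. -/
def majcode (w : List ℕ) : List ℕ :=
  (List.range w.length).map (fun i => maj (w.filter (· ≤ i+1)) - maj (w.filter (· ≤ i)))

/-- `Mc`-code: `d_i = maj(σ^{(i)}) - maj(σ^{(i+1)})`, where `σ^{(i)}` erases letters `< i`. -/
def mc (w : List ℕ) : List ℕ :=
  (List.range w.length).map (fun i => maj (w.filter (fun x => i+1 ≤ x)) - maj (w.filter (fun x => i+2 ≤ x)))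

/-- One-line word of the inverse permutation. -/
def invWord (w : List ℕ) : List ℕ :=
  (List.range w.length).map (fun i => w.idxOf (i+1) + 1)

/-- `Ic σ = Lc (σ⁻¹)`. -/
def ic (w : List ℕ) : List ℕ := lc (invWord w)

/-- Inverse ligne of route. -/
def iligne (w : List ℕ) : Finset ℕ := ligne (invWord w)

/-- Complement map `δ` on codes: `δ(d₁⋯d_n) = (0-d₁)(1-d₂)⋯(n-1-d_n)`. -/
def deltaC (w : List ℕ) : List ℕ :=
  (List.range w.length).map (fun i => i - w.getD i 0)

/-- Nondecreasing rearrangement of a word. -/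
def sortW (w : List ℕ) : List ℕ := List.insertionSort (· ≤ ·) w

/-- Set-valued statistic `El = Ligne ∘ Mc⁻¹` on subdiagonal words. -/
noncomputable def El (d : List ℕ) : Finset ℕ := by
  classical
  exact if h : ∃ w, IsPermWord d.length w ∧ mc w = d then ligne h.choose else ∅

/-- Set-valued statistic `Eul = Ligne ∘ Majcode⁻¹` on subexcedent words. -/
noncomputable def Eul (d : List ℕ) : Finset ℕ := by
  classical
  exact if h : ∃ w, IsPermWord d.length w ∧ majcode w = d then ligne h.choose else ∅


def NLset (L : Finset ℕ) (p m : ℕ) : Finset ℕ :=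
  (L.filter (· < p)) ∪ (if p < m then {p+1} else ∅) ∪ ((L.filter (fun j => p < j)).image (· + 1))

theorem mem_NLset {L : Finset ℕ} {p m x : ℕ} :
    x ∈ NLset L p m ↔ (x ∈ L ∧ x < p) ∨ (p < m ∧ x = p + 1) ∨ (x - 1 ∈ L ∧ p + 1 < x) := by
  unfold NLset
  simp only [Finset.mem_union, Finset.mem_filter, Finset.mem_image]
  constructor
  · rintro ((⟨h1, h2⟩ | h) | ⟨j, ⟨hj1, hj2⟩, rfl⟩)
    · exact Or.inl ⟨h1, h2⟩
    · split_ifs at h with hpm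
      · simp only [Finset.mem_singleton] at h; exact Or.inr (Or.inl ⟨hpm, h⟩)
      · simp at h
    · refine Or.inr (Or.inr ⟨by simpa using hj1, by omega⟩)
  · rintro (⟨h1, h2⟩ | ⟨h1, h2⟩ | ⟨h1, h2⟩)
    · exact Or.inl (Or.inl ⟨h1, h2⟩)
    · rw [if_pos h1]; exact Or.inl (Or.inr (by simp [h2]))
    · exact Or.inr ⟨x - 1, ⟨h1, by omega⟩, by omega⟩

theorem NLset_subset {L : Finset ℕ} {p m : ℕ} (hL : L ⊆ Finset.Icc 1 (m-1)) (hp : p ≤ m) :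
    NLset L p m ⊆ Finset.Icc 1 m := by
  intro x hx
  rw [mem_NLset] at hx
  rw [Finset.mem_Icc]
  rcases hx with ⟨h1, h2⟩ | ⟨h1, h2⟩ | ⟨h1, h2⟩
  · have := Finset.mem_Icc.1 (hL h1); omega
  · omega
  · have := Finset.mem_Icc.1 (hL h1); omega

theorem KL {L : Finset ℕ} {m p p' : ℕ} (hm : 1 ≤ m) (hL : L ⊆ Finset.Icc 1 (m-1)) (hp : p ≤ m)
    (hpm : p ∈ L ∨ p = m) (hp1 : p' ∈ L ∨ p' = 0) (hlt : p' < p)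
    (hgap : ∀ j ∈ L, ¬(p' < j ∧ j < p)) :
    NLset (Finset.Icc 1 (m-1) \ L) p' m = Finset.Icc 1 m \ NLset L p m := by
  classical
  have hL' : ∀ y, y ∈ L → 1 ≤ y ∧ y ≤ m - 1 := fun y h => Finset.mem_Icc.1 (hL h)
  ext x
  simp only [mem_NLset, Finset.mem_sdiff, Finset.mem_Icc]
  set a := (if x ∈ L then 1 else 0) with haa
  set b := (if x - 1 ∈ L then 1 else 0) with hbb
  set c := (if p ∈ L then 1 else 0) with hcc
  set d := (if p' ∈ L then 1 else 0) with hdd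
  have ha : x ∈ L ↔ a = 1 := by by_cases h : x ∈ L <;> simp [haa, h]
  have hb : x - 1 ∈ L ↔ b = 1 := by by_cases h : x - 1 ∈ L <;> simp [hbb, h]
  have F1 : a = 1 → (1 ≤ x ∧ x ≤ m - 1 ∧ ¬(p' < x ∧ x < p)) := fun h =>
    ⟨(hL' x (ha.2 h)).1, (hL' x (ha.2 h)).2, hgap x (ha.2 h)⟩
  have F2 : b = 1 → (1 ≤ x - 1 ∧ x - 1 ≤ m - 1 ∧ ¬(p' < x - 1 ∧ x - 1 < p)) := fun h =>
    ⟨(hL' _ (hb.2 h)).1, (hL' _ (hb.2 h)).2, hgap _ (hb.2 h)⟩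
  have F3 : c = 1 ∨ p = m := by
    rcases hpm with h | h
    · exact Or.inl (by simp [hcc, h])
    · exact Or.inr h
  have F4 : c = 1 → (1 ≤ p ∧ p ≤ m - 1) := by
    intro h; apply hL' p; by_contra hc; simp [hcc, hc] at h
  have F5 : d = 1 ∨ p' = 0 := by
    rcases hp1 with h | h
    · exact Or.inl (by simp [hdd, h])
    · exact Or.inr h
  have F6 : d = 1 → (1 ≤ p' ∧ p' ≤ m - 1) := by
    intro h; apply hL' p'; by_contra hc; simp [hdd, hc] at h
  have F7 : x = p → a = c := by rintro rfl; rfl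
  have F8 : x = p' → a = d := by rintro rfl; rfl
  have F9 : x - 1 = p → b = c := by intro h; rw [hbb, h, hcc]
  have F10 : x - 1 = p' → b = d := by intro h; rw [hbb, h, hdd]
  have ha0 : a = 0 ∨ a = 1 := by rcases em (x ∈ L) with h|h <;> simp [haa, h]
  have hb0 : b = 0 ∨ b = 1 := by rcases em (x - 1 ∈ L) with h|h <;> simp [hbb, h]
  rw [ha, hb]
  omega

def partner (L : Finset ℕ) (m p : ℕ) : ℕ :=
  if p ∈ L ∨ p = m then WithBot.unbotD 0 ((L.filter (· < p)).max)
  else WithTop.untopD m ((((Finset.Icc 1 (m-1)) \ L).filter (fun j => p < j)).min)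

theorem partner_spec1 {L : Finset ℕ} {m p : ℕ} (hL : L ⊆ Finset.Icc 1 (m-1))
    (h : p ∈ L ∨ p = m) (hm : 1 ≤ m) (hp : p ≤ m) :
    (partner L m p ∈ L ∨ partner L m p = 0) ∧ partner L m p < p ∧
      ∀ j ∈ L, ¬(partner L m p < j ∧ j < p) := by
  have hp1 : 1 ≤ p := by
    rcases h with h | h
    · exact (Finset.mem_Icc.1 (hL h)).1
    · omega
  rw [partner, if_pos h]
  set S := L.filter (· < p) with hS
  rcases eq_or_ne S ∅ with hSe | hSe
  · rw [hSe]
    simp only [Finset.max_empty, WithBot.unbotD_bot]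
    refine ⟨Or.inr (by trivial), hp1, fun j hj hcon => ?_⟩
    have : j ∈ S := by rw [hS, Finset.mem_filter]; exact ⟨hj, hcon.2⟩
    rw [hSe] at this; simp at this
  · have hSn : S.Nonempty := Finset.nonempty_iff_ne_empty.2 hSe
    obtain ⟨a, hamax⟩ := Finset.max_of_nonempty hSn
    rw [hamax]
    have haS : a ∈ S := Finset.mem_of_max hamax
    rw [hS, Finset.mem_filter] at haS
    simp only [WithBot.unbotD_coe]
    refine ⟨Or.inl haS.1, haS.2, fun j hj hcon => ?_⟩
    have hjS : j ∈ S := by rw [hS, Finset.mem_filter]; exact ⟨hj, hcon.2⟩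
    have := Finset.le_max_of_eq hjS hamax
    omega

theorem partner_spec2 {L : Finset ℕ} {m p : ℕ} (hL : L ⊆ Finset.Icc 1 (m-1))
    (h : ¬(p ∈ L ∨ p = m)) (hp : p ≤ m) :
    (partner L m p ∈ Finset.Icc 1 (m-1) \ L ∨ partner L m p = m) ∧ p < partner L m p ∧
      partner L m p ≤ m ∧
      ∀ j ∈ Finset.Icc 1 (m-1) \ L, ¬(p < j ∧ j < partner L m p) := by
  rw [partner, if_neg h]
  push_neg at h
  set T := ((Finset.Icc 1 (m-1)) \ L).filter (fun j => p < j) with hT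
  rcases eq_or_ne T ∅ with hTe | hTe
  · rw [hTe]
    simp only [Finset.min_empty, WithTop.untopD_top]
    refine ⟨Or.inr (by trivial), by omega, le_refl m, fun j hj hcon => ?_⟩
    have : j ∈ T := by rw [hT, Finset.mem_filter]; exact ⟨hj, hcon.1⟩
    rw [hTe] at this; simp at this
  · have hTn : T.Nonempty := Finset.nonempty_iff_ne_empty.2 hTe
    obtain ⟨a, hamin⟩ := Finset.min_of_nonempty hTn
    rw [hamin]
    have haT : a ∈ T := Finset.mem_of_min hamin
    rw [hT, Finset.mem_filter] at haT
    simp only [WithTop.untopD_coe]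
    have ham : a ≤ m - 1 := (Finset.mem_Icc.1 (Finset.mem_sdiff.1 haT.1).1).2
    refine ⟨Or.inl haT.1, haT.2, by omega, fun j hj hcon => ?_⟩
    have hjT : j ∈ T := by rw [hT, Finset.mem_filter]; exact ⟨hj, hcon.1⟩
    have := Finset.min_le_of_eq hjT hamin
    omega

theorem partner_invol1 {L : Finset ℕ} {m p : ℕ} (hL : L ⊆ Finset.Icc 1 (m-1))
    (h : p ∈ L ∨ p = m) (hm : 1 ≤ m) (hp : p ≤ m) :
    partner (Finset.Icc 1 (m-1) \ L) m (partner L m p) = p := by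
  obtain ⟨hmem, hlt, hgap⟩ := partner_spec1 hL h hm hp
  set p' := partner L m p with hp'
  have hnot : ¬(p' ∈ Finset.Icc 1 (m-1) \ L ∨ p' = m) := by
    rintro (hc | hc)
    · rcases hmem with hmem | hmem
      · exact (Finset.mem_sdiff.1 hc).2 hmem
      · rw [hmem] at hc; simp [Finset.mem_Icc] at hc
    · omega
  rw [partner, if_neg hnot, Finset.sdiff_sdiff_eq_self hL]
  set T := L.filter (fun j => p' < j) with hT
  rcases h with h | h
  · have hpT : p ∈ T := by rw [hT, Finset.mem_filter]; exact ⟨h, hlt⟩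
    have hTn : T.Nonempty := ⟨p, hpT⟩
    obtain ⟨a, hamin⟩ := Finset.min_of_nonempty hTn
    rw [hamin, WithTop.untopD_coe]
    have haT : a ∈ T := Finset.mem_of_min hamin
    rw [hT, Finset.mem_filter] at haT
    have h1 := Finset.min_le_of_eq hpT hamin
    have h2 := hgap a haT.1
    omega
  · have hTe : T = ∅ := by
      rw [Finset.eq_empty_iff_forall_notMem]
      intro j hj
      rw [hT, Finset.mem_filter] at hj
      have := (Finset.mem_Icc.1 (hL hj.1)).2
      exact hgap j hj.1 ⟨hj.2, by omega⟩
    rw [hTe]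
    simp only [Finset.min_empty, WithTop.untopD_top]
    omega

theorem partner_invol2 {L : Finset ℕ} {m p : ℕ} (hL : L ⊆ Finset.Icc 1 (m-1))
    (h : ¬(p ∈ L ∨ p = m)) (hp : p ≤ m) :
    partner (Finset.Icc 1 (m-1) \ L) m (partner L m p) = p := by
  obtain ⟨hmem, hlt, hle, hgap⟩ := partner_spec2 hL h hp
  push_neg at h
  set q := partner L m p with hq
  have hyes : q ∈ Finset.Icc 1 (m-1) \ L ∨ q = m := hmem
  rw [partner, if_pos hyes]
  set S := (Finset.Icc 1 (m-1) \ L).filter (· < q) with hS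
  rcases Nat.eq_zero_or_pos p with hp0 | hp0
  · have hSe : S = ∅ := by
      rw [Finset.eq_empty_iff_forall_notMem]
      intro j hj
      rw [hS, Finset.mem_filter] at hj
      have hj1 := (Finset.mem_Icc.1 (Finset.mem_sdiff.1 hj.1).1).1
      exact hgap j hj.1 ⟨by omega, hj.2⟩
    rw [hSe]
    simp [hp0]
  · have hpS : p ∈ S := by
      rw [hS, Finset.mem_filter]
      refine ⟨Finset.mem_sdiff.2 ⟨Finset.mem_Icc.2 ⟨hp0, by omega⟩, h.1⟩, hlt⟩
    have hSn : S.Nonempty := ⟨p, hpS⟩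
    obtain ⟨a, hamax⟩ := Finset.max_of_nonempty hSn
    rw [hamax, WithBot.unbotD_coe]
    have haS : a ∈ S := Finset.mem_of_max hamax
    rw [hS, Finset.mem_filter] at haS
    have h1 := Finset.le_max_of_eq hpS hamax
    have h2 := hgap a haS.1
    omega
theorem mem_ligne {w : List ℕ} {i : ℕ} :
    i ∈ ligne w ↔ 1 ≤ i ∧ i ≤ w.length - 1 ∧ w.getD (i-1) 0 > w.getD i 0 := by
  simp [ligne, Finset.mem_filter, Finset.mem_Icc, and_assoc]

theorem ligne_insertIdx (v : List ℕ) (a p : ℕ) (hp : p ≤ v.length)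
    (ha : ∀ x ∈ v, x < a) : ligne (v.insertIdx p a) = NLset (ligne v) p v.length := by
  have hlen : (v.insertIdx p a).length = v.length + 1 := List.length_insertIdx_of_le_length hp a
  have hbound : ∀ k, k < v.length → v.getD k 0 < a := by
    intro k hk
    rw [List.getD_eq_getElem v 0 hk]
    exact ha _ (List.getElem_mem hk)
  have h1 : ∀ k, k < p → (v.insertIdx p a).getD k 0 = v.getD k 0 := by
    intro k hk
    have hkm : k < v.length := lt_of_lt_of_le hk hp
    rw [List.getD_eq_getElem _ 0 (by omega), List.getD_eq_getElem v 0 hkm]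
    exact List.getElem_insertIdx_of_lt hk _
  have h2 : (v.insertIdx p a).getD p 0 = a := by
    rw [List.getD_eq_getElem _ 0 (by omega)]
    exact List.getElem_insertIdx_self _
  have h3 : ∀ k, p < k → k ≤ v.length → (v.insertIdx p a).getD k 0 = v.getD (k-1) 0 := by
    intro k hk1 hk2
    have hkm : k - 1 < v.length := by omega
    rw [List.getD_eq_getElem _ 0 (by omega), List.getD_eq_getElem v 0 hkm]
    have e := List.getElem_insertIdx_add_succ v a p (k - p - 1) (by omega)
    simp only [show p + (k - p - 1) = k - 1 from by omega] at e
    simp only [show k - 1 + 1 = k from by omega] at e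
    exact e
  ext i
  rw [mem_NLset, mem_ligne, mem_ligne, mem_ligne, hlen]
  simp only [Nat.add_sub_cancel]
  rcases Nat.eq_zero_or_pos i with rfl | hi
  · simp
  rcases lt_trichotomy i p with hip | rfl | hip
  · rw [h1 i hip, h1 (i-1) (by omega)]
    omega
  · rw [h2, h1 (i-1) (by omega)]
    have hb : v.getD (i-1) 0 < a := hbound _ (by omega)
    omega
  rcases Nat.lt_or_ge v.length i with him | him
  · have l1 : (v.insertIdx p a).getD i 0 = 0 := List.getD_eq_default _ _ (by omega)
    omega
  rcases eq_or_lt_of_le (show p + 1 ≤ i from hip) with rfl | hip2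
  · have e1 := h3 (p+1) (by omega) him
    simp only [Nat.add_sub_cancel] at e1 ⊢
    rw [e1, h2]
    have hb : v.getD p 0 < a := hbound _ (by omega)
    simp only [true_and, and_true, false_and, and_false, true_or, or_true, false_or, or_false]
    omega
  · rw [h3 i (by omega) him, h3 (i-1) (by omega) (by omega)]
    omega
theorem sum_NLset_le {L : Finset ℕ} {p m : ℕ} (hL : L ⊆ Finset.Icc 1 (m-1)) (hp : p ≤ m) :
    ∑ i ∈ L, i ≤ ∑ i ∈ NLset L p m, i ∧ ∑ i ∈ NLset L p m, i ≤ (∑ i ∈ L, i) + m := by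
  classical
  have hLb : ∀ y ∈ L, 1 ≤ y ∧ y ≤ m - 1 := fun y h => Finset.mem_Icc.1 (hL h)
  have hd1 : Disjoint (L.filter (· < p)) (if p < m then ({p+1} : Finset ℕ) else ∅) := by
    split_ifs
    · rw [Finset.disjoint_singleton_right, Finset.mem_filter]
      rintro ⟨-, h⟩; omega
    · exact Finset.disjoint_empty_right _
  have hd2 : Disjoint ((L.filter (· < p)) ∪ (if p < m then ({p+1} : Finset ℕ) else ∅))
      ((L.filter (fun j => p < j)).image (· + 1)) := by
    rw [Finset.disjoint_right]
    intro x hx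
    simp only [Finset.mem_image, Finset.mem_filter] at hx
    obtain ⟨j, ⟨-, hj2⟩, rfl⟩ := hx
    simp only [Finset.mem_union, Finset.mem_filter]
    rintro (⟨-, h⟩ | h)
    · omega
    · split_ifs at h
      · simp only [Finset.mem_singleton] at h; omega
      · simp at h
  have hsum : ∑ i ∈ NLset L p m, i =
      (∑ i ∈ L.filter (· < p), i) + (if p < m then p + 1 else 0)
        + ((∑ i ∈ L.filter (fun j => p < j), i) + (L.filter (fun j => p < j)).card) := by
    rw [NLset, Finset.sum_union hd2, Finset.sum_union hd1]
    congr 1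
    · congr 1
      split_ifs <;> simp
    · rw [Finset.sum_image (by intros x _ y _ h; simp only at h; omega), Finset.sum_add_distrib,
        Finset.sum_const, smul_eq_mul, mul_one]
  have hLsplit : ∑ i ∈ L, i =
      (∑ i ∈ L.filter (· < p), i) +
        ((if p ∈ L then p else 0) + (∑ i ∈ L.filter (fun j => p < j), i)) := by
    rw [← Finset.sum_filter_add_sum_filter_not L (· < p)]
    congr 1
    rw [← Finset.sum_filter_add_sum_filter_not (L.filter (fun j => ¬ j < p)) (· = p)]
    congr 1
    · rw [Finset.filter_filter]
      have he : L.filter (fun j => ¬ j < p ∧ j = p) = L.filter (· = p) := by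
        apply Finset.filter_congr; intro x _; constructor
        · rintro ⟨-, h⟩; exact h
        · rintro rfl; exact ⟨lt_irrefl _, rfl⟩
      rw [he, Finset.filter_eq']
      split_ifs <;> simp
    · rw [Finset.filter_filter]
      apply Finset.sum_congr _ (fun _ _ => rfl)
      apply Finset.filter_congr; intro x _; constructor
      · rintro ⟨h1, h2⟩; omega
      · intro h; omega
  have hsubI : L.filter (fun j => p < j) ⊆ Finset.Icc (p+1) (m-1) := by
    intro j hj
    rw [Finset.mem_filter] at hj
    have := hLb j hj.1
    rw [Finset.mem_Icc]; omega
  have hcard := Finset.card_le_card hsubI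
  rw [Nat.card_Icc] at hcard
  rcases em (p ∈ L) with hmem | hmem
  · have hb := hLb p hmem
    have hm1 : 1 ≤ m := by omega
    rw [hsum, hLsplit, if_pos hmem, if_pos (show p < m by omega)]
    omega
  · rw [hsum, hLsplit, if_neg hmem]
    by_cases hpm : p < m
    · rw [if_pos hpm]; omega
    · rw [if_neg hpm]
      have he : L.filter (fun j => p < j) = ∅ := by
        rw [Finset.filter_eq_empty_iff]; intro j hj; have := hLb j hj; omega
      rw [he]; simp

theorem ligne_subset (w : List ℕ) : ligne w ⊆ Finset.Icc 1 (w.length - 1) :=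
  Finset.filter_subset _ _

theorem insertIdx_eq (l : List ℕ) (a : ℕ) (p : ℕ) (h : p ≤ l.length) :
    l.insertIdx p a = l.take p ++ a :: l.drop p := by
  induction l generalizing p with
  | nil => simp at h; simp [h]
  | cons b t ih =>
    cases p with
    | zero => simp
    | succ p => simp [List.insertIdx_succ_cons, ih p (by simpa using h)]

theorem indexOf_append_cons (t : List ℕ) (a : ℕ) (d : List ℕ) (h : a ∉ t) :
    (t ++ a :: d).idxOf a = t.length := by
  induction t with
  | nil => simp
  | cons b t ih =>
    simp only [List.mem_cons, not_or] at h
    rw [List.cons_append, List.idxOf_cons_ne _ (Ne.symm h.1), ih h.2]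
    rfl

theorem perm_insertIdx (l : List ℕ) (a : ℕ) (p : ℕ) (h : p ≤ l.length) :
    (l.insertIdx p a).Perm (a :: l) := by
  rw [insertIdx_eq l a p h]
  refine (List.perm_middle).trans ?_
  rw [List.take_append_drop]

theorem filter_insertIdx_le {u : List ℕ} {a p k : ℕ} (hp : p ≤ u.length) (hk : k < a) :
    (u.insertIdx p a).filter (· ≤ k) = u.filter (· ≤ k) := by
  rw [insertIdx_eq u a p hp, List.filter_append,
    List.filter_cons_of_neg (by simp; omega), ← List.filter_append, List.take_append_drop]

theorem indexOf_insertIdx {u : List ℕ} {a p : ℕ} (hp : p ≤ u.length) (ha : a ∉ u) :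
    (u.insertIdx p a).idxOf a = p := by
  rw [insertIdx_eq u a p hp]
  have h2 : a ∉ u.take p := fun h => ha (List.mem_of_mem_take h)
  rw [indexOf_append_cons _ _ _ h2, List.length_take]
  omega

theorem isPermWord_length {n : ℕ} {w : List ℕ} (h : IsPermWord n w) : w.length = n := by
  have := h.length_eq
  rwa [List.length_range'] at this

theorem isPermWord_mem {n : ℕ} {w : List ℕ} (h : IsPermWord n w) :
    ∀ x ∈ w, 1 ≤ x ∧ x ≤ n := by
  intro x hx
  have := h.mem_iff.1 hx
  rw [List.mem_range'_1] at this
  omega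

theorem range'_filter_le (n k : ℕ) (hk : k ≤ n) :
    (List.range' 1 n).filter (· ≤ k) = List.range' 1 k := by
  induction n with
  | zero => interval_cases k; rfl
  | succ n ih =>
    rcases Nat.eq_or_lt_of_le hk with rfl | hlt
    · apply List.filter_eq_self.2
      intro x hx
      rw [List.mem_range'_1] at hx
      simp; omega
    · rw [List.range'_1_concat, List.filter_append, ih (by omega)]
      have : ¬ (1 + n ≤ k) := by omega
      simp [this]

theorem isPermWord_filter_le {n : ℕ} {w : List ℕ} (h : IsPermWord n w) {k : ℕ} (hk : k ≤ n) :
    IsPermWord k (w.filter (· ≤ k)) := by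
  unfold IsPermWord at *
  rw [← range'_filter_le n k hk]
  exact h.filter _

theorem reconstruct : ∀ (n : ℕ) (w : List ℕ), (∀ x ∈ w, x ≤ n+1) → w.count (n+1) = 1 →
    (w.filter (· ≤ n)).insertIdx (w.idxOf (n+1)) (n+1) = w := by
  intro n w
  induction w with
  | nil => intro _ hc; simp at hc
  | cons a t ih =>
    intro hmem hc
    by_cases hane : a = n + 1
    · subst hane
      rw [List.count_cons_self] at hc
      have hnt : (n+1) ∉ t := by
        intro hmem2
        have := List.count_pos_iff.2 hmem2  -- count (n+1) t > 0 ; check name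
        omega
      have hft : t.filter (· ≤ n) = t := List.filter_eq_self.2 (fun x hx => by
        have h1 := hmem x (List.mem_cons_of_mem _ hx)
        have : x ≠ n + 1 := fun he => hnt (he ▸ hx)
        simp; omega)
      rw [List.idxOf_cons_self]
      rw [List.filter_cons_of_neg (by simp), hft]
      rfl
    · have han : a ≤ n := by
        have := hmem a List.mem_cons_self
        omega
      rw [List.idxOf_cons_ne _ hane]
      rw [List.filter_cons_of_pos (by simp [han])]
      rw [List.count_cons_of_ne hane] at hc
      have := ih (fun x hx => hmem x (List.mem_cons_of_mem _ hx)) hc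
      simp only [Nat.succ_eq_add_one]
      rw [List.insertIdx_succ_cons, this]

theorem isPermWord_struct {n : ℕ} {w : List ℕ} (h : IsPermWord (n+1) w) :
    IsPermWord n (w.filter (· ≤ n)) ∧ w.idxOf (n+1) ≤ n ∧
      (w.filter (· ≤ n)).insertIdx (w.idxOf (n+1)) (n+1) = w := by
  have hmem := isPermWord_mem h
  have hn1 : (n+1) ∈ w := by
    rw [h.mem_iff, List.mem_range'_1]; omega
  refine ⟨isPermWord_filter_le h (by omega), ?_, ?_⟩
  · have := List.idxOf_lt_length_iff.2 hn1
    have hl := isPermWord_length h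
    omega
  · apply reconstruct
    · intro x hx; exact (hmem x hx).2
    · rw [h.count_eq]
      apply List.count_eq_one_of_mem
      · exact List.nodup_range'
      · rw [List.mem_range'_1]; omega
def fAux : ℕ → List ℕ → List ℕ
  | 0, _ => []
  | n+1, w =>
      (fAux n (w.filter (· ≤ n))).insertIdx
        (partner (ligne (w.filter (· ≤ n))) n (w.idxOf (n+1))) (n+1)

theorem fAux_succ (n : ℕ) (w : List ℕ) :
    fAux (n+1) w = (fAux n (w.filter (· ≤ n))).insertIdx
        (partner (ligne (w.filter (· ≤ n))) n (w.idxOf (n+1))) (n+1) := rfl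

theorem fAux_one : fAux 1 [1] = [1] := by decide

theorem ligne_singleton (a : ℕ) : ligne [a] = ∅ := rfl

theorem fAux_main : ∀ n, ∀ w, IsPermWord n w →
    IsPermWord n (fAux n w) ∧ ligne (fAux n w) = Finset.Icc 1 (n-1) \ ligne w ∧
      fAux n (fAux n w) = w := by
  intro n
  induction n with
  | zero =>
    intro w h
    have hw : w = [] := List.length_eq_zero_iff.1 (isPermWord_length h)
    subst hw
    exact ⟨List.Perm.refl _, by show ligne [] = _; simp [ligne], rfl⟩
  | succ n ih =>
    intro w h
    rcases Nat.eq_zero_or_pos n with rfl | hn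
    · -- n + 1 = 1
      have hw : w = [1] := by
        have := h
        unfold IsPermWord at this
        exact List.perm_singleton.1 this
      subst hw
      rw [fAux_one]
      exact ⟨h, by rw [ligne_singleton]; simp, fAux_one⟩
    obtain ⟨hv, hple, hw⟩ := isPermWord_struct h
    set v := w.filter (· ≤ n) with hv_def
    set p := w.idxOf (n+1) with hp_def
    obtain ⟨hu1, hu2, hu3⟩ := ih v hv
    set u := fAux n v with hu_def
    have hlv : v.length = n := isPermWord_length hv
    have hlu : u.length = n := isPermWord_length hu1
    have hva : ∀ x ∈ v, x < n+1 := fun x hx => by have := isPermWord_mem hv x hx; omega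
    have hua : ∀ x ∈ u, x < n+1 := fun x hx => by have := isPermWord_mem hu1 x hx; omega
    set L := ligne v with hL_def
    have hL : L ⊆ Finset.Icc 1 (n-1) := by
      have := ligne_subset v; rwa [hlv] at this
    set p' := partner L n p with hp'_def
    have hfw : fAux (n+1) w = u.insertIdx p' (n+1) := fAux_succ n w
    have hlig_w : ligne w = NLset L p n := by
      conv_lhs => rw [← hw]
      rw [ligne_insertIdx v _ p (by omega) hva, hlv]
    have key : p' ≤ n ∧ NLset (Finset.Icc 1 (n-1) \ L) p' n = Finset.Icc 1 n \ NLset L p n ∧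
        partner (Finset.Icc 1 (n-1) \ L) n p' = p := by
      rcases em (p ∈ L ∨ p = n) with hc | hc
      · obtain ⟨hq1, hq2, hq3⟩ := partner_spec1 hL hc hn (by omega)
        exact ⟨by omega, KL hn hL (by omega) hc hq1 hq2 hq3, partner_invol1 hL hc hn (by omega)⟩
      · obtain ⟨hq1, hq2, hq2', hq3⟩ := partner_spec2 hL hc (by omega)
        have hp0 : p ∈ Finset.Icc 1 (n-1) \ L ∨ p = 0 := by
          push_neg at hc
          rcases Nat.eq_zero_or_pos p with h0 | h0
          · exact Or.inr h0
          · exact Or.inl (Finset.mem_sdiff.2 ⟨Finset.mem_Icc.2 ⟨h0, by omega⟩, hc.1⟩)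
        have hNL0 := KL hn Finset.sdiff_subset hq2' hq1 hp0 hq2 hq3
        rw [Finset.sdiff_sdiff_eq_self hL] at hNL0
        have hsub : NLset (Finset.Icc 1 (n-1) \ L) p' n ⊆ Finset.Icc 1 n :=
          NLset_subset Finset.sdiff_subset hq2'
        refine ⟨hq2', ?_, partner_invol2 hL hc (by omega)⟩
        rw [hNL0, Finset.sdiff_sdiff_eq_self hsub]
    obtain ⟨hp'le, hNL, hinvolp⟩ := key
    have hligfw : ligne (fAux (n+1) w) = NLset (Finset.Icc 1 (n-1) \ L) p' n := by
      rw [hfw, ligne_insertIdx u _ p' (by omega) hua, hlu, hu2]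
    refine ⟨?_, ?_, ?_⟩
    · rw [hfw]
      unfold IsPermWord
      refine (perm_insertIdx u (n+1) p' (by omega)).trans ?_
      refine (List.Perm.cons _ hu1).trans ?_
      rw [List.range'_1_concat]
      have := (List.perm_middle (a := n+1) (l₁ := List.range' 1 n) (l₂ := [])).symm
      simpa [Nat.add_comm] using this
    · rw [hligfw, hNL, hlig_w]
      norm_num
    · rw [hfw, fAux_succ]
      have e1 : (u.insertIdx p' (n+1)).filter (· ≤ n) = u := by
        rw [filter_insertIdx_le (by omega) (by omega)]
        apply List.filter_eq_self.2
        intro x hx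
        have := hua x hx
        simp; omega
      have e2 : (u.insertIdx p' (n+1)).idxOf (n+1) = p' :=
        indexOf_insertIdx (by omega) (fun hmem => by have := hua _ hmem; omega)
      rw [e1, e2, hu3, hu2, hinvolp]
      exact hw
theorem partner_le {L : Finset ℕ} {m p : ℕ} (hL : L ⊆ Finset.Icc 1 (m-1)) (hm : 1 ≤ m)
    (hp : p ≤ m) : partner L m p ≤ m := by
  rcases em (p ∈ L ∨ p = m) with hc | hc
  · obtain ⟨-, h2, -⟩ := partner_spec1 hL hc hm hp
    omega
  · obtain ⟨-, -, h3, -⟩ := partner_spec2 hL hc hp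
    exact h3

theorem double_filter (w : List ℕ) {k n : ℕ} (hk : k ≤ n) :
    (w.filter (· ≤ n)).filter (· ≤ k) = w.filter (· ≤ k) := by
  rw [List.filter_filter]
  apply List.filter_congr
  intro x _
  by_cases hxk : x ≤ k
  · simp [hxk]; omega
  · simp [hxk]

theorem fAux_filter : ∀ n, ∀ w : List ℕ, IsPermWord n w → ∀ k, k ≤ n →
    (fAux n w).filter (· ≤ k) = fAux k (w.filter (· ≤ k)) := by
  intro n
  induction n with
  | zero =>
    intro w h k hk
    interval_cases k
    have hw : w = [] := List.length_eq_zero_iff.1 (isPermWord_length h)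
    subst hw
    rfl
  | succ n ih =>
    intro w h k hk
    have hperm := (fAux_main (n+1) w h).1
    rcases Nat.eq_or_lt_of_le hk with rfl | hkn
    · rw [List.filter_eq_self.2, List.filter_eq_self.2]
      · intro x hx; have := isPermWord_mem h x hx; simpa using this.2
      · intro x hx; have := isPermWord_mem hperm x hx; simpa using this.2
    have hkn' : k ≤ n := by omega
    rcases Nat.eq_zero_or_pos k with rfl | hk1
    · rw [show fAux 0 (w.filter (· ≤ 0)) = [] from rfl]
      rw [List.filter_eq_nil_iff]
      intro x hx
      have := isPermWord_mem hperm x hx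
      simp; omega
    have hn1 : 1 ≤ n := by omega
    obtain ⟨hv, hple, hwrec⟩ := isPermWord_struct h
    obtain ⟨hu1, -, -⟩ := fAux_main n _ hv
    have hlu : (fAux n (w.filter (· ≤ n))).length = n := isPermWord_length hu1
    have hLsub : ligne (w.filter (· ≤ n)) ⊆ Finset.Icc 1 (n-1) := by
      have := ligne_subset (w.filter (· ≤ n))
      rwa [isPermWord_length hv] at this
    rw [fAux_succ, filter_insertIdx_le (by rw [hlu]; exact partner_le hLsub hn1 hple) (by omega)]
    rw [ih _ hv k hkn', double_filter w hkn']

theorem maj_fAux {n : ℕ} {w : List ℕ} (h : IsPermWord n w) :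
    maj (fAux n w) + maj w = ∑ i ∈ Finset.Icc 1 (n-1), i := by
  obtain ⟨h1, h2, -⟩ := fAux_main n w h
  rw [maj, maj, h2]
  apply Finset.sum_sdiff
  have := ligne_subset w
  rwa [isPermWord_length h] at this

theorem maj_filter_succ {n : ℕ} {w : List ℕ} (h : IsPermWord n w) {k : ℕ} (hk : k < n) :
    maj (w.filter (· ≤ k)) ≤ maj (w.filter (· ≤ k+1)) ∧
      maj (w.filter (· ≤ k+1)) ≤ maj (w.filter (· ≤ k)) + k := by
  have hwk1 : IsPermWord (k+1) (w.filter (· ≤ k+1)) := isPermWord_filter_le h (by omega)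
  obtain ⟨hv, hple, hrec⟩ := isPermWord_struct hwk1
  rw [double_filter w (by omega)] at hv hrec
  have hlv : (w.filter (· ≤ k)).length = k := isPermWord_length hv
  have hva : ∀ x ∈ w.filter (· ≤ k), x < k+1 := fun x hx => by
    have := isPermWord_mem hv x hx; omega
  have hb : maj (w.filter (· ≤ k+1)) = ∑ i ∈ NLset (ligne (w.filter (· ≤ k)))
      ((w.filter (· ≤ k+1)).idxOf (k+1)) k, i := by
    conv_lhs => rw [← hrec]
    rw [maj, ligne_insertIdx _ _ _ (by omega) hva, hlv]
  have hLsub : ligne (w.filter (· ≤ k)) ⊆ Finset.Icc 1 (k-1) := by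
    have := ligne_subset (w.filter (· ≤ k)); rwa [hlv] at this
  have := sum_NLset_le hLsub hple
  rw [hb]
  exact ⟨this.1, this.2⟩

theorem getD_majcode {w : List ℕ} {i : ℕ} (hi : i < w.length) :
    (majcode w).getD i 0 = maj (w.filter (· ≤ i+1)) - maj (w.filter (· ≤ i)) := by
  rw [majcode, List.getD_eq_getElem _ 0 (by simpa using hi)]
  simp

theorem majcode_fAux {n : ℕ} {w : List ℕ} (h : IsPermWord n w) :
    majcode (fAux n w) = deltaC (majcode w) := by
  have hlf : (fAux n w).length = n := isPermWord_length (fAux_main n w h).1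
  have hlw : w.length = n := isPermWord_length h
  have hlmc : (majcode w).length = n := by rw [majcode]; simp [hlw]
  rw [majcode, deltaC, hlf, hlmc]
  apply List.map_congr_left
  intro i hi
  rw [List.mem_range] at hi
  rw [getD_majcode (by omega)]
  have e1 : (fAux n w).filter (· ≤ i+1) = fAux (i+1) (w.filter (· ≤ i+1)) :=
    fAux_filter n w h (i+1) (by omega)
  have e2 : (fAux n w).filter (· ≤ i) = fAux i (w.filter (· ≤ i)) :=
    fAux_filter n w h i (by omega)
  have hw1 : IsPermWord (i+1) (w.filter (· ≤ i+1)) := isPermWord_filter_le h (by omega)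
  have hw0 : IsPermWord i (w.filter (· ≤ i)) := isPermWord_filter_le h (by omega)
  have m1 := maj_fAux hw1
  have m0 := maj_fAux hw0
  have mono := maj_filter_succ h hi
  have hstep : ∑ j ∈ Finset.Icc 1 (i+1-1), j = (∑ j ∈ Finset.Icc 1 (i-1), j) + i := by
    rcases Nat.eq_zero_or_pos i with rfl | hi1
    · simp
    · rw [show i + 1 - 1 = (i-1) + 1 by omega, Finset.sum_Icc_succ_top (by omega)]
      congr 1
      omega
  rw [e1, e2]
  omega
theorem ligne_toWord_rev {n : ℕ} (σ : Equiv.Perm (Fin n)) :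
    ligne (toWord ((Fin.revPerm : Equiv.Perm (Fin n)) * σ)) =
      Finset.Icc 1 (n-1) \ ligne (toWord σ) := by
  have hl1 : (toWord σ).length = n := by simp [toWord]
  have hl2 : (toWord ((Fin.revPerm : Equiv.Perm (Fin n)) * σ)).length = n := by simp [toWord]
  ext i
  rw [Finset.mem_sdiff, Finset.mem_Icc, mem_ligne, mem_ligne, hl1, hl2]
  by_cases hi : 1 ≤ i ∧ i ≤ n - 1
  · have hi1 : i - 1 < n := by omega
    have hi2 : i < n := by omega
    have g1 : ∀ (τ : Equiv.Perm (Fin n)) (j : ℕ) (hj : j < n),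
        (toWord τ).getD j 0 = (τ ⟨j, hj⟩ : ℕ) + 1 := by
      intro τ j hj
      rw [toWord, List.getD_eq_getElem _ 0 (by simp [hj])]
      simp
    rw [g1 _ _ hi1, g1 _ _ hi2, g1 _ _ hi1, g1 _ _ hi2]
    have hrev : ∀ (j : ℕ) (hj : j < n),
        (((Fin.revPerm : Equiv.Perm (Fin n)) * σ) ⟨j, hj⟩ : ℕ) = n - 1 - (σ ⟨j, hj⟩ : ℕ) := by
      intro j hj
      simp [Equiv.Perm.mul_apply, Fin.rev]
      omega
    rw [hrev _ hi1, hrev _ hi2]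
    have hne : (σ ⟨i-1, hi1⟩ : ℕ) ≠ (σ ⟨i, hi2⟩ : ℕ) := by
      intro hc
      have he : (⟨i-1, hi1⟩ : Fin n) = ⟨i, hi2⟩ := σ.injective (Fin.ext hc)
      have := congrArg Fin.val he
      simp at this
      omega
    have b1 : (σ ⟨i-1, hi1⟩ : ℕ) < n := (σ _).isLt
    have b2 : (σ ⟨i, hi2⟩ : ℕ) < n := (σ _).isLt
    omega
  · omega

theorem ligne_toWord_subset {n : ℕ} (σ : Equiv.Perm (Fin n)) :
    ligne (toWord σ) ⊆ Finset.Icc 1 (n-1) := by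
  have h := ligne_subset (toWord σ)
  rwa [show (toWord σ).length = n by simp [toWord]] at h

theorem maj_rev {n : ℕ} (σ : Equiv.Perm (Fin n)) :
    maj (toWord ((Fin.revPerm : Equiv.Perm (Fin n)) * σ)) + maj (toWord σ) =
      ∑ i ∈ Finset.Icc 1 (n-1), i := by
  rw [maj, maj, ligne_toWord_rev σ]
  exact Finset.sum_sdiff (ligne_toWord_subset σ)

theorem maj_toWord_le {n : ℕ} (σ : Equiv.Perm (Fin n)) :
    maj (toWord σ) ≤ ∑ i ∈ Finset.Icc 1 (n-1), i :=
  Finset.sum_le_sum_of_subset (ligne_toWord_subset σ)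

theorem sum_Icc_gauss (n : ℕ) (hn : 1 ≤ n) : ∑ i ∈ Finset.Icc 1 (n-1), i = n * (n-1) / 2 := by
  rw [← Finset.sum_range_id]
  apply Finset.sum_subset
  · intro x hx; rw [Finset.mem_Icc] at hx; rw [Finset.mem_range]; omega
  · intro x hx hnx; rw [Finset.mem_range] at hx; rw [Finset.mem_Icc] at hnx; omega

theorem stmt7 (n : ℕ) (hn : 1 ≤ n) :
    (∃ f : List ℕ → List ℕ,
      ∀ w : List ℕ, IsPermWord n w →
        IsPermWord n (f w) ∧ majcode (f w) = deltaC (majcode w) ∧ f (f w) = w ∧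
          ligne (f w) = Finset.Icc 1 (n - 1) \ ligne w) ∧
    ∀ q : ℚ, q ≠ 0 →
      ∑ σ : Equiv.Perm (Fin n), q ^ maj (toWord σ) =
        q ^ (n * (n - 1) / 2) * ∑ σ : Equiv.Perm (Fin n), (1 / q) ^ maj (toWord σ) := by
  constructor
  · refine ⟨fAux n, fun w hw => ?_⟩
    obtain ⟨h1, h2, h3⟩ := fAux_main n w hw
    exact ⟨h1, majcode_fAux hw, h3, h2⟩
  · intro q hq
    have hle : ∀ σ : Equiv.Perm (Fin n), maj (toWord σ) ≤ n * (n-1) / 2 := fun σ => by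
      have := maj_toWord_le σ
      rwa [sum_Icc_gauss n hn] at this
    have hrev : ∀ σ : Equiv.Perm (Fin n),
        maj (toWord ((Fin.revPerm : Equiv.Perm (Fin n)) * σ)) = n*(n-1)/2 - maj (toWord σ) := by
      intro σ
      have h1 := maj_rev σ
      rw [sum_Icc_gauss n hn] at h1
      omega
    calc ∑ σ : Equiv.Perm (Fin n), q ^ maj (toWord σ)
        = ∑ σ : Equiv.Perm (Fin n),
            q ^ maj (toWord ((Equiv.mulLeft (Fin.revPerm : Equiv.Perm (Fin n))) σ)) :=
          (Equiv.sum_comp (Equiv.mulLeft (Fin.revPerm : Equiv.Perm (Fin n)))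
            (fun σ => q ^ maj (toWord σ))).symm
      _ = ∑ σ : Equiv.Perm (Fin n), q ^ (n*(n-1)/2) * (1/q) ^ maj (toWord σ) := by
          apply Finset.sum_congr rfl
          intro σ _
          rw [show (Equiv.mulLeft (Fin.revPerm : Equiv.Perm (Fin n))) σ
            = (Fin.revPerm : Equiv.Perm (Fin n)) * σ from rfl]
          rw [hrev σ, pow_sub₀ q hq (hle σ), one_div, inv_pow]
      _ = q ^ (n * (n-1) / 2) * ∑ σ : Equiv.Perm (Fin n), (1/q) ^ maj (toWord σ) := by
          rw [Finset.mul_sum]
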